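/- The map f(x,y,τ) = (x+c, y+g(x)) on ℝ² is symplectic with respect to dx ∧ dy, has the translation symmetry Y = ∂/∂y generated by the Hamiltonian I(x,y) = x, yet for any c ≠ 0, I is not invariant under f (indeed I ∘ f = I + c), and f has no recurrent orbits: no point x* satisfies f^{t_i}(x*) → x* for any sequence t_i → ∞. Hence the recurrence hypothesis in the discrete Noether theorem is necessary. -/

import Mathlib

open Filter

/-- The map `f(x,y) = (x + c, y + g x)` on `ℝ²` is symplectic for
`dx ∧ dy`, has the translation symmetry `Y = ∂/∂y` (i.e. `Df(p)(0,1) = (0,1)`),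
generated by the Hamiltonian `I(x,y) = x`; yet for `c ≠ 0` the function `I` is
not invariant (indeed `I ∘ f = I + c`), and `f` has no recurrent orbits: no
point `x*` satisfies `f^[t i](x*) → x*` along a sequence `t i → ∞`.  Hence the
recurrence hypothesis in the discrete Noether theorem is necessary. -/
theorem noether_recurrence_necessary
    (c : ℝ) (hc : c ≠ 0) (g : ℝ → ℝ) (hg : Differentiable ℝ g)
    (f : ℝ × ℝ → ℝ × ℝ) (hfdef : ∀ p, f p = (p.1 + c, p.2 + g p.1)) :
    -- f is symplectic: f^*(dx ∧ dy) = dx ∧ dy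
    (∀ (p u v : ℝ × ℝ),
      (fderiv ℝ f p u).1 * (fderiv ℝ f p v).2 - (fderiv ℝ f p u).2 * (fderiv ℝ f p v).1
        = u.1 * v.2 - u.2 * v.1) ∧
    -- Y = ∂/∂y is a symmetry: f^*Y = Y
    (∀ p : ℝ × ℝ, fderiv ℝ f p (0, 1) = ((0 : ℝ), (1 : ℝ))) ∧
    -- I(x,y) = x is not invariant: I ∘ f = I + c with c ≠ 0
    (∀ p : ℝ × ℝ, (f p).1 = p.1 + c) ∧
    -- f has no recurrent points
    (¬ ∃ (xstar : ℝ × ℝ) (t : ℕ → ℕ), StrictMono t ∧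
        Tendsto (fun i => f^[t i] xstar) atTop (nhds xstar)) := by
  have hfe : f = fun p => (p.1 + c, p.2 + g p.1) := funext hfdef
  have hD : ∀ p : ℝ × ℝ, HasFDerivAt f
      ((ContinuousLinearMap.fst ℝ ℝ ℝ).prod
        (ContinuousLinearMap.snd ℝ ℝ ℝ + deriv g p.1 • ContinuousLinearMap.fst ℝ ℝ ℝ)) p := by
    intro p
    rw [hfe]
    exact HasFDerivAt.prodMk (hasFDerivAt_fst.add_const c)
      (hasFDerivAt_snd.add ((hg p.1).hasDerivAt.comp_hasFDerivAt p hasFDerivAt_fst))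
  have hDeq : ∀ (p u : ℝ × ℝ),
      fderiv ℝ f p u = (u.1, u.2 + deriv g p.1 * u.1) := by
    intro p u
    rw [(hD p).fderiv]
    simp [ContinuousLinearMap.prod_apply, smul_eq_mul]
  refine ⟨?_, ?_, ?_, ?_⟩
  · intro p u v
    simp only [hDeq]
    ring
  · intro p
    simp [hDeq]
  · intro p
    rw [hfdef]
  · rintro ⟨x, t, ht, htend⟩
    have hiter : ∀ n : ℕ, (f^[n] x).1 = x.1 + n * c := by
      intro n
      induction n with
      | zero => simp
      | succ n ih =>
        rw [Function.iterate_succ_apply', hfdef, ih]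
        push_cast
        ring
    have h1 : Tendsto (fun i => (f^[t i] x).1) atTop (nhds x.1) :=
      (continuous_fst.tendsto x).comp htend
    simp only [hiter] at h1
    have h2 : Tendsto (fun i => ((t i : ℝ)) * c) atTop (nhds 0) := by
      have := h1.sub_const x.1
      simpa [add_sub_cancel_left] using this
    have h3 : Tendsto (fun i => ((t i : ℝ))) atTop (nhds 0) := by
      have := h2.mul_const c⁻¹
      simpa [mul_assoc, mul_inv_cancel₀ hc] using this
    have h4 : Tendsto (fun i => ((t i : ℝ))) atTop atTop :=
      tendsto_natCast_atTop_atTop.comp ht.tendsto_atTop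
    exact not_tendsto_atTop_of_tendsto_nhds h3 h4
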